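/- arXiv:2411.18488 — 2 statements merged into one kernel-verified Lean document; each statement's English description precedes it below -/
import Mathlib

section
/- Let L = {ℓ_1,…,ℓ_k} be a line arrangement in the complex projective plane with k ≥ 10 lines, let q be the largest integer with t_q(L) ≠ 0, and suppose the lines ℓ_1,…,ℓ_q all pass through one common point. Assume t_{k−q+1}(L) = 0, k ≤ 2q − 2, and t_{k−q}(L) ≠ 0. Then the Levi graph G(L) contains an induced cycle of length 10 if and only if the lines ℓ_{q+1},…,ℓ_k have no common point, i.e. Sing(L) ∩ ℓ_{q+1} ∩ ⋯ ∩ ℓ_k = ∅. -/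
open scoped LinearAlgebra.Projectivization
open Projectivization

/-- The complex projective plane. -/
abbrev ProjPoint := ℙ ℂ (Fin 3 → ℂ)

/-- A subset of the projective plane is a (projective) line if it is the zero locus of a
nonzero linear form. -/
def IsProjLine (L : Set ProjPoint) : Prop :=
  ∃ f : (Fin 3 → ℂ) →ₗ[ℂ] ℂ, f ≠ 0 ∧ L = {p | p.submodule ≤ LinearMap.ker f}

lemma finrank_ker_eq_two {f : (Fin 3 → ℂ) →ₗ[ℂ] ℂ} (hf : f ≠ 0) :
    Module.finrank ℂ (LinearMap.ker f) = 2 := by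
  have h1 : LinearMap.range f = ⊤ := by
    rcases LinearMap.surjective_of_ne_zero hf with h
    exact LinearMap.range_eq_top.mpr h
  have := LinearMap.finrank_range_add_finrank_ker f
  rw [h1, finrank_top] at this
  simp only [Module.finrank_self] at this
  have h3 : Module.finrank ℂ (Fin 3 → ℂ) = 3 := by simp
  omega

lemma lines_intersect {L₁ L₂ : Set ProjPoint} (h₁ : IsProjLine L₁) (h₂ : IsProjLine L₂) :
    ∃ p, p ∈ L₁ ∧ p ∈ L₂ := by
  obtain ⟨f, hf, rfl⟩ := h₁
  obtain ⟨g, hg, rfl⟩ := h₂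
  have h3 : Module.finrank ℂ (Fin 3 → ℂ) = 3 := by simp
  have hsup : Module.finrank ℂ ↥(LinearMap.ker f ⊔ LinearMap.ker g) ≤ 3 :=
    (Submodule.finrank_le (LinearMap.ker f ⊔ LinearMap.ker g)).trans_eq h3
  have heq := Submodule.finrank_sup_add_finrank_inf_eq (LinearMap.ker f) (LinearMap.ker g)
  rw [finrank_ker_eq_two hf, finrank_ker_eq_two hg] at heq
  have hbot : LinearMap.ker f ⊓ LinearMap.ker g ≠ ⊥ := by
    intro hb
    rw [hb, finrank_bot] at heq
    omega
  obtain ⟨v, hv, hv0⟩ := Submodule.exists_mem_ne_zero_of_ne_bot hbot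
  refine ⟨Projectivization.mk ℂ v hv0, ?_, ?_⟩
  · simp only [Set.mem_setOf_eq, submodule_mk]
    rw [Submodule.span_singleton_le_iff_mem]
    exact hv.1
  · simp only [Set.mem_setOf_eq, submodule_mk]
    rw [Submodule.span_singleton_le_iff_mem]
    exact hv.2

lemma lines_inter_unique {L₁ L₂ : Set ProjPoint} (h₁ : IsProjLine L₁) (h₂ : IsProjLine L₂)
    (hne : L₁ ≠ L₂) {p q : ProjPoint} (hp₁ : p ∈ L₁) (hp₂ : p ∈ L₂) (hq₁ : q ∈ L₁)
    (hq₂ : q ∈ L₂) : p = q := by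
  by_contra hpq
  obtain ⟨f, hf, rfl⟩ := h₁
  obtain ⟨g, hg, rfl⟩ := h₂
  have hker : LinearMap.ker f ≠ LinearMap.ker g := fun h => hne (by rw [h])
  -- sup of the two kernels has finrank 3
  have hff := finrank_ker_eq_two hf
  have hgg := finrank_ker_eq_two hg
  have hsup3 : Module.finrank ℂ ↥(LinearMap.ker f ⊔ LinearMap.ker g) = 3 := by
    have h3 : Module.finrank ℂ (Fin 3 → ℂ) = 3 := by simp
    have hle3 : Module.finrank ℂ ↥(LinearMap.ker f ⊔ LinearMap.ker g) ≤ 3 :=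
      (Submodule.finrank_le (LinearMap.ker f ⊔ LinearMap.ker g)).trans_eq h3
    have hlt : LinearMap.ker f < LinearMap.ker f ⊔ LinearMap.ker g := by
      rcases lt_or_eq_of_le (le_sup_left : LinearMap.ker f ≤ _) with h | h
      · exact h
      · exfalso
        have : LinearMap.ker g ≤ LinearMap.ker f := h ▸ le_sup_right
        exact hker ((Submodule.eq_of_le_of_finrank_eq this (by omega)).symm)
    have := Submodule.finrank_lt_finrank_of_lt hlt
    omega
  have hinf1 : Module.finrank ℂ ↥(LinearMap.ker f ⊓ LinearMap.ker g) = 1 := by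
    have := Submodule.finrank_sup_add_finrank_inf_eq (LinearMap.ker f) (LinearMap.ker g)
    omega
  -- p.submodule and q.submodule are distinct 1-dim subspaces inside a 1-dim space
  have hpW : p.submodule ≤ LinearMap.ker f ⊓ LinearMap.ker g := le_inf hp₁ hp₂
  have hqW : q.submodule ≤ LinearMap.ker f ⊓ LinearMap.ker g := le_inf hq₁ hq₂
  have hpeq : p.submodule = LinearMap.ker f ⊓ LinearMap.ker g :=
    Submodule.eq_of_le_of_finrank_eq hpW (by rw [finrank_submodule, hinf1])
  have hqeq : q.submodule = LinearMap.ker f ⊓ LinearMap.ker g :=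
    Submodule.eq_of_le_of_finrank_eq hqW (by rw [finrank_submodule, hinf1])
  exact hpq (Projectivization.submodule_injective (hpeq.trans hqeq.symm))

/-- The line in the projective plane with equation `a*x + b*y + c*z = 0`. -/
def projLine (a b c : ℂ) : Set ProjPoint :=
  {p : ProjPoint | ∀ v ∈ p.submodule, a * v 0 + b * v 1 + c * v 2 = 0}

/-- An arrangement of `k` distinct lines in the complex projective plane. -/
structure LineArrangement (k : ℕ) where
  line : Fin k → Set ProjPoint
  isLine : ∀ i, IsProjLine (line i)
  inj : Function.Injective line

namespace LineArrangement

variable {k : ℕ} (A : LineArrangement k)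

/-- The multiplicity of a point: the number of lines of the arrangement passing through it. -/
noncomputable def mult (p : ProjPoint) : ℕ :=
  Set.ncard {i : Fin k | p ∈ A.line i}

/-- The singular points of the arrangement: points lying on at least two of the lines. -/
def sing : Set ProjPoint := {p | 2 ≤ A.mult p}

/-- `A.t r` is the number of points of multiplicity exactly `r`. -/
noncomputable def t (r : ℕ) : ℕ := Set.ncard {p | A.mult p = r}

/-- The Levi graph of a line arrangement: the bipartite graph on `Sing(L) ⊔ L` where a point is
adjacent to a line iff the point lies on the line. -/
def levi : SimpleGraph (↥A.sing ⊕ Fin k) where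
  Adj v w :=
    match v, w with
    | Sum.inl p, Sum.inr i => p.1 ∈ A.line i
    | Sum.inr i, Sum.inl p => p.1 ∈ A.line i
    | _, _ => False
  symm := by
    constructor
    rintro (p | i) (q | j) h <;> simp_all
  loopless := by
    constructor
    rintro (p | i) h <;> simp_all

end LineArrangement

namespace LineArrangement

variable {k : ℕ} (A : LineArrangement k)

variable {A}

/-- Unique intersection point of two distinct lines of the arrangement. -/
lemma point_eq_point {i j : Fin k} (hij : i ≠ j) {p q : ProjPoint}
    (hpi : p ∈ A.line i) (hpj : p ∈ A.line j) (hqi : q ∈ A.line i) (hqj : q ∈ A.line j) :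
    p = q :=
  lines_inter_unique (A.isLine i) (A.isLine j) (fun h => hij (A.inj h)) hpi hpj hqi hqj

lemma mem_sing_of_two {i j : Fin k} (hij : i ≠ j) {p : ProjPoint}
    (hpi : p ∈ A.line i) (hpj : p ∈ A.line j) : p ∈ A.sing := by
  have : ({i, j} : Set (Fin k)) ⊆ {n : Fin k | p ∈ A.line n} := by
    rintro n (rfl | rfl) <;> assumption
  have h2 : ({i, j} : Set (Fin k)).ncard = 2 := Set.ncard_pair hij
  have := Set.ncard_le_ncard this (Set.toFinite _)
  simpa [LineArrangement.sing, LineArrangement.mult, h2] using this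

lemma exists_two_of_mem_sing {p : ProjPoint} (hp : p ∈ A.sing) :
    ∃ i j : Fin k, i ≠ j ∧ p ∈ A.line i ∧ p ∈ A.line j := by
  have h : 1 < Set.ncard {n : Fin k | p ∈ A.line n} := hp
  obtain ⟨i, j, hi, hj, hij⟩ := (Set.one_lt_ncard_iff (Set.toFinite _)).mp h
  exact ⟨i, j, hij, hi, hj⟩

lemma sing_finite : A.sing.Finite := by
  have hsub : A.sing ⊆ ⋃ (i : Fin k), ⋃ (j : Fin k), ⋃ (_ : i ≠ j), A.line i ∩ A.line j := by
    intro p hp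
    obtain ⟨i, j, hij, hpi, hpj⟩ := exists_two_of_mem_sing hp
    exact Set.mem_iUnion.mpr ⟨i, Set.mem_iUnion.mpr ⟨j, Set.mem_iUnion.mpr ⟨hij, hpi, hpj⟩⟩⟩
  refine Set.Finite.subset ?_ hsub
  refine Set.finite_iUnion fun i => Set.finite_iUnion fun j => Set.finite_iUnion fun hij => ?_
  refine Set.Subsingleton.finite fun p hp q hq => ?_
  exact point_eq_point hij hp.1 hp.2 hq.1 hq.2

lemma mult_le (p : ProjPoint) : A.mult p ≤ k := by
  have := Set.ncard_le_ncard (Set.subset_univ {i : Fin k | p ∈ A.line i}) (Set.toFinite _)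
  simpa [LineArrangement.mult, Set.ncard_univ] using this

lemma t_ne_zero_of_mult {p : ProjPoint} {r : ℕ} (hr : 2 ≤ r) (hp : A.mult p = r) :
    A.t r ≠ 0 := by
  have hsub : {q | A.mult q = r} ⊆ A.sing := fun q hq => by
    simp only [Set.mem_setOf_eq] at hq; exact le_of_le_of_eq hr hq.symm
  have hfin : {q | A.mult q = r}.Finite := sing_finite.subset hsub
  have : {q | A.mult q = r}.Nonempty := ⟨p, hp⟩
  exact ((Set.ncard_pos hfin).mpr this).ne'

lemma exists_of_t_ne_zero {r : ℕ} (h : A.t r ≠ 0) : ∃ p, A.mult p = r := by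
  have : {p | A.mult p = r}.Nonempty := Set.nonempty_of_ncard_ne_zero h
  exact this



variable (A)

/-- No induced pentagon when every line passes through `c` or through `d`. -/
lemma no_pentagon (c d : ProjPoint)
    (hline : ∀ i : Fin k, c ∈ A.line i ∨ d ∈ A.line i)
    (j : Fin 5 → Fin k) (hj : Function.Injective j)
    (p : Fin 5 → ProjPoint)
    (hinc : ∀ s t : Fin 5, p s ∈ A.line (j t) ↔ (t = s ∨ t = s + 1)) : False := by
  classical
  set g : Fin 5 → Bool := fun t => if c ∈ A.line (j t) then true else false with hg
  have pigeon : ∀ f : Fin 5 → Bool, ∃ a b c : Fin 5,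
      a ≠ b ∧ a ≠ c ∧ b ≠ c ∧ f a = f b ∧ f b = f c := by decide
  obtain ⟨a, b, c', hab, hac, hbc, hgab, hgbc⟩ := pigeon g
  set e0 : ProjPoint := if g a then c else d with he0
  have hmem : ∀ t : Fin 5, g t = g a → e0 ∈ A.line (j t) := by
    intro t ht
    by_cases hca : g a = true
    · rw [he0, if_pos hca]
      have : g t = true := ht.trans hca
      simpa [hg] using this
    · rw [he0, if_neg hca]
      have hgt : g t = false := ht.trans (Bool.eq_false_iff.mpr hca)
      have : ¬ c ∈ A.line (j t) := by
        intro hc; simp [hg, hc] at hgt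
      exact (hline (j t)).resolve_left this
  have htriple : ∀ a b c : Fin 5, a ≠ b → a ≠ c → b ≠ c →
      ∃ s t : Fin 5, (s = a ∨ s = b ∨ s = c) ∧ (s+1 = a ∨ s+1 = b ∨ s+1 = c) ∧
        (t = a ∨ t = b ∨ t = c) ∧ t ≠ s ∧ t ≠ s + 1 := by
    intro a b c; fin_cases a <;> fin_cases b <;> fin_cases c <;> decide
  obtain ⟨s, t, hs, hs1, ht, hts, hts1⟩ := htriple a b c' hab hac hbc
  have hmem' : ∀ r : Fin 5, (r = a ∨ r = b ∨ r = c') → e0 ∈ A.line (j r) := by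
    rintro r (rfl | rfl | rfl)
    · exact hmem _ rfl
    · exact hmem _ hgab.symm
    · exact hmem _ (hgbc.symm.trans hgab.symm)
  have hss1' : ∀ r : Fin 5, r ≠ r + 1 := by decide
  have hss1 : s ≠ s + 1 := hss1' s
  have hjne : j s ≠ j (s + 1) := fun h => hss1 (hj h)
  have hps : p s ∈ A.line (j s) := (hinc s s).mpr (Or.inl rfl)
  have hps1 : p s ∈ A.line (j (s + 1)) := (hinc s (s + 1)).mpr (Or.inr rfl)
  have hpe : p s = e0 :=
    point_eq_point hjne hps hps1 (hmem' s hs) (hmem' (s + 1) hs1)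
  have := (hinc s t).mp (hpe ▸ hmem' t ht)
  rcases this with h | h
  · exact hts h
  · exact hts1 h

/-- Build an induced 10-cycle in the Levi graph from a pentagon. -/
lemma buildPentagon (j : Fin 5 → Fin k) (hj : Function.Injective j)
    (p : Fin 5 → ProjPoint) (hp : Function.Injective p) (hsing : ∀ s, p s ∈ A.sing)
    (hinc : ∀ s t : Fin 5, p s ∈ A.line (j t) ↔ (t = s ∨ t = s + 1)) :
    Nonempty (SimpleGraph.cycleGraph 10 ↪g A.levi) := by
  set f : Fin 10 → ↥A.sing ⊕ Fin k := fun i =>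
    if h : i.val % 2 = 0 then Sum.inr (j ⟨i.val / 2, by omega⟩)
    else Sum.inl ⟨p ⟨i.val / 2, by omega⟩, hsing _⟩ with hf
  have hfeven : ∀ (z : Fin 10) (hz : z.val % 2 = 0), f z = Sum.inr (j ⟨z.val / 2, by omega⟩) := by
    intro z hz; simp only [hf]; rw [dif_pos hz]
  have hfodd : ∀ (z : Fin 10) (hz : ¬ z.val % 2 = 0),
      f z = Sum.inl ⟨p ⟨z.val / 2, by omega⟩, hsing _⟩ := by
    intro z hz; simp only [hf]; rw [dif_neg hz]
  have hfinj : Function.Injective f := by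
    intro x y hxy
    have hx10 := x.isLt; have hy10 := y.isLt
    by_cases hx : x.val % 2 = 0 <;> by_cases hy : y.val % 2 = 0
    · rw [hfeven x hx, hfeven y hy] at hxy
      have := congrArg Fin.val (hj (Sum.inr.inj hxy))
      simp only at this
      exact Fin.ext (by omega)
    · rw [hfeven x hx, hfodd y hy] at hxy
      exact absurd hxy (by simp)
    · rw [hfodd x hx, hfeven y hy] at hxy
      exact absurd hxy (by simp)
    · rw [hfodd x hx, hfodd y hy] at hxy
      have := congrArg Fin.val (hp (congrArg Subtype.val (Sum.inl.inj hxy)))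
      simp only at this
      exact Fin.ext (by omega)
  refine ⟨⟨⟨f, hfinj⟩, ?_⟩⟩
  intro x y
  simp only [Function.Embedding.coeFn_mk]
  have hx10 := x.isLt; have hy10 := y.isLt
  by_cases hx : x.val % 2 = 0 <;> by_cases hy : y.val % 2 = 0
  · rw [hfeven x hx, hfeven y hy]
    constructor
    · intro h; exact h.elim
    · intro h
      rw [SimpleGraph.cycleGraph_adj'] at h
      simp only [Fin.sub_def] at h
      omega
  · rw [hfeven x hx, hfodd y hy]
    have hiff : A.levi.Adj (Sum.inr (j ⟨x.val / 2, by omega⟩))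
        (Sum.inl ⟨p ⟨y.val / 2, by omega⟩, hsing _⟩) ↔
        p ⟨y.val / 2, by omega⟩ ∈ A.line (j ⟨x.val / 2, by omega⟩) := Iff.rfl
    rw [hiff, hinc, SimpleGraph.cycleGraph_adj']
    simp only [Fin.ext_iff, Fin.add_def, Fin.sub_def, Fin.val_one]
    omega
  · rw [hfodd x hx, hfeven y hy]
    have hiff : A.levi.Adj (Sum.inl ⟨p ⟨x.val / 2, by omega⟩, hsing _⟩)
        (Sum.inr (j ⟨y.val / 2, by omega⟩)) ↔
        p ⟨x.val / 2, by omega⟩ ∈ A.line (j ⟨y.val / 2, by omega⟩) := Iff.rfl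
    rw [hiff, hinc, SimpleGraph.cycleGraph_adj']
    simp only [Fin.ext_iff, Fin.add_def, Fin.sub_def, Fin.val_one]
    omega
  · rw [hfodd x hx, hfodd y hy]
    constructor
    · intro h; exact h.elim
    · intro h
      rw [SimpleGraph.cycleGraph_adj'] at h
      simp only [Fin.sub_def] at h
      omega


/-- Rotation automorphism of the 10-cycle. -/
def rot10 : SimpleGraph.cycleGraph 10 ≃g SimpleGraph.cycleGraph 10 where
  toEquiv := Equiv.addRight (1 : Fin 10)
  map_rel_iff' := by
    intro a b
    simp only [Equiv.coe_addRight]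
    revert a b
    decide

variable {A}

lemma extract_pentagon (e : SimpleGraph.cycleGraph 10 ↪g A.levi)
    (q0 : ↥A.sing) (h0 : e ⟨0, by omega⟩ = Sum.inl q0) :
    ∃ (j : Fin 5 → Fin k) (p : Fin 5 → ProjPoint), Function.Injective j ∧
      ∀ s t : Fin 5, p s ∈ A.line (j t) ↔ (t = s ∨ t = s + 1) := by
  have hadj : ∀ a b : Fin 10, A.levi.Adj (e a) (e b) ↔ (SimpleGraph.cycleGraph 10).Adj a b :=
    fun a b => e.map_rel_iff
  have step1 : ∀ (a b : Fin 10) (q : ↥A.sing), (SimpleGraph.cycleGraph 10).Adj a b →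
      e a = Sum.inl q → ∃ i : Fin k, e b = Sum.inr i := by
    intro a b q hab hea
    have h := (hadj a b).mpr hab
    rw [hea] at h
    rcases hb : e b with q' | i
    · rw [hb] at h; exact h.elim
    · exact ⟨i, rfl⟩
  have step2 : ∀ (a b : Fin 10) (i : Fin k), (SimpleGraph.cycleGraph 10).Adj a b →
      e a = Sum.inr i → ∃ q : ↥A.sing, e b = Sum.inl q := by
    intro a b i hab hea
    have h := (hadj a b).mpr hab
    rw [hea] at h
    rcases hb : e b with q' | i'
    · exact ⟨q', rfl⟩
    · rw [hb] at h; exact h.elim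
  obtain ⟨i1, h1⟩ := step1 ⟨0, by omega⟩ ⟨1, by omega⟩ q0 (by decide) h0
  obtain ⟨q1, h2⟩ := step2 ⟨1, by omega⟩ ⟨2, by omega⟩ i1 (by decide) h1
  obtain ⟨i3, h3⟩ := step1 ⟨2, by omega⟩ ⟨3, by omega⟩ q1 (by decide) h2
  obtain ⟨q2, h4⟩ := step2 ⟨3, by omega⟩ ⟨4, by omega⟩ i3 (by decide) h3
  obtain ⟨i5, h5⟩ := step1 ⟨4, by omega⟩ ⟨5, by omega⟩ q2 (by decide) h4
  obtain ⟨q3, h6⟩ := step2 ⟨5, by omega⟩ ⟨6, by omega⟩ i5 (by decide) h5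
  obtain ⟨i7, h7⟩ := step1 ⟨6, by omega⟩ ⟨7, by omega⟩ q3 (by decide) h6
  obtain ⟨q4, h8⟩ := step2 ⟨7, by omega⟩ ⟨8, by omega⟩ i7 (by decide) h7
  obtain ⟨i9, h9⟩ := step1 ⟨8, by omega⟩ ⟨9, by omega⟩ q4 (by decide) h8
  set J : Fin 5 → Fin k := ![i1, i3, i5, i7, i9] with hJ
  set Q : Fin 5 → ↥A.sing := ![q0, q1, q2, q3, q4] with hQ
  have hje : ∀ t : Fin 5, e ⟨2 * t.val + 1, by omega⟩ = Sum.inr (J t) := by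
    intro t
    fin_cases t
    · exact h1
    · exact h3
    · exact h5
    · exact h7
    · exact h9
  have hpe : ∀ s : Fin 5, e ⟨2 * s.val, by omega⟩ = Sum.inl (Q s) := by
    intro s
    fin_cases s
    · exact h0
    · exact h2
    · exact h4
    · exact h6
    · exact h8
  refine ⟨J, fun s => (Q (s + 1)).1, ?_, ?_⟩
  · intro s t hst
    have ha := hje s
    have hb := hje t
    rw [hst] at ha
    have h := e.injective (ha.trans hb.symm)
    have h' := congrArg Fin.val h
    simp only at h'
    exact Fin.ext (by omega)
  · intro s t
    have key := hadj ⟨2 * (s + 1).val, by omega⟩ ⟨2 * t.val + 1, by omega⟩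
    rw [hpe (s + 1), hje t] at key
    have hL : ((Q (s + 1)).1 ∈ A.line (J t)) ↔
        (SimpleGraph.cycleGraph 10).Adj ⟨2 * (s + 1).val, by omega⟩ ⟨2 * t.val + 1, by omega⟩ := key
    have harith : ∀ s t : Fin 5, ((SimpleGraph.cycleGraph 10).Adj
        ⟨2 * (s + 1).val, by omega⟩ ⟨2 * t.val + 1, by omega⟩ ↔ (t = s ∨ t = s + 1)) := by decide
    exact hL.trans (harith s t)

/-- Forward direction: if every line goes through `c` or `d`, no induced 10-cycle. -/
lemma no_induced_cycle_ten (c d : ProjPoint)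
    (hline : ∀ i : Fin k, c ∈ A.line i ∨ d ∈ A.line i)
    (e : SimpleGraph.cycleGraph 10 ↪g A.levi) : False := by
  rcases h0 : e ⟨0, by omega⟩ with q0 | i0
  · obtain ⟨j, p, hj, hinc⟩ := extract_pentagon e q0 h0
    exact A.no_pentagon c d hline j hj p hinc
  · have hadj01 : A.levi.Adj (e ⟨0, by omega⟩) (e ⟨1, by omega⟩) :=
      e.map_rel_iff.mpr (by decide)
    rw [h0] at hadj01
    rcases h1 : e ⟨1, by omega⟩ with q1 | i1
    swap
    · rw [h1] at hadj01; exact hadj01.elim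
    · set e' : SimpleGraph.cycleGraph 10 ↪g A.levi := e.comp (rot10).toEmbedding with he'
      have h0' : e' ⟨0, by omega⟩ = Sum.inl q1 := by
        have heq : e' ⟨0, by omega⟩ = e ((⟨0, by omega⟩ : Fin 10) + 1) := by
          simp [he', rot10, SimpleGraph.Embedding.comp_apply]
        have h01 : ((⟨0, by omega⟩ : Fin 10) + 1) = ⟨1, by omega⟩ := by decide
        rw [heq, h01]
        exact h1
      obtain ⟨j, p, hj, hinc⟩ := extract_pentagon e' q1 h0'
      exact A.no_pentagon c d hline j hj p hinc

end LineArrangement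

lemma Set.subsingleton_ncard_le_one {α : Type*} {s : Set α} (h : s.Subsingleton) :
    s.ncard ≤ 1 := by
  rcases h.eq_empty_or_singleton with rfl | ⟨x, rfl⟩ <;> simp


/-- A simple graph has an induced cycle of length `n` if there is an induced subgraph
isomorphic to the cycle graph `C_n`, i.e. a graph embedding of `C_n`. -/
def HasInducedCycle {V : Type*} (G : SimpleGraph V) (n : ℕ) : Prop :=
  Nonempty (SimpleGraph.cycleGraph n ↪g G)

/-- `k ≥ 10` lines, `q` maximal with `t_q ≠ 0`, lines `ℓ_0, …, ℓ_{q-1}` through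
a common point, `t_{k-q+1} = 0`, `k ≤ 2q - 2` and `t_{k-q} ≠ 0`. Then the Levi graph has an
induced cycle of length `10` iff the remaining lines `ℓ_q, …, ℓ_{k-1}` have no common
singular point. -/
theorem inducedCycle_ten_iff_no_common_point (k q : ℕ) (hk : 10 ≤ k)
    (A : LineArrangement k)
    (htq : A.t q ≠ 0) (hqmax : ∀ r : ℕ, q < r → A.t r = 0)
    (c : ProjPoint) (hc : ∀ i : Fin k, (i : ℕ) < q → c ∈ A.line i)
    (h2 : A.t (k - q + 1) = 0) (h3 : k ≤ 2 * q - 2) (h4 : A.t (k - q) ≠ 0) :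
    HasInducedCycle A.levi 10 ↔
      {p ∈ A.sing | ∀ i : Fin k, q ≤ (i : ℕ) → p ∈ A.line i} = ∅ := by
  have hq6 : 6 ≤ q := by omega
  obtain ⟨pq, hpq⟩ := LineArrangement.exists_of_t_ne_zero htq
  have hqk : q ≤ k := hpq ▸ LineArrangement.mult_le pq
  -- the set of "pencil" indices has exactly q elements
  have hS : {i : Fin k | (i : ℕ) < q}.ncard = q := by
    have himg : {i : Fin k | (i : ℕ) < q} = (fun a : Fin q => Fin.castLE hqk a) '' Set.univ := by
      ext i
      simp only [Set.mem_setOf_eq, Set.image_univ, Set.mem_range]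
      constructor
      · intro h; exact ⟨⟨i.val, h⟩, Fin.ext rfl⟩
      · rintro ⟨a, rfl⟩; exact a.isLt
    rw [himg, Set.ncard_image_of_injective _ (Fin.castLE_injective hqk)]
    simp [Set.ncard_univ]
  -- multiplicity of c is exactly q, so c lies exactly on the pencil lines
  have hmultc : A.mult c = q := by
    have hle : q ≤ A.mult c := by
      rw [← hS]
      exact Set.ncard_le_ncard (fun i hi => hc i hi) (Set.toFinite _)
    rcases eq_or_lt_of_le hle with h | h
    · exact h.symm
    · exact absurd (hqmax _ h) (LineArrangement.t_ne_zero_of_mult (by omega) rfl)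
  have hcq : ∀ i : Fin k, c ∈ A.line i ↔ (i : ℕ) < q := by
    have heq : {i : Fin k | (i : ℕ) < q} = {i : Fin k | c ∈ A.line i} := by
      have hle : Set.ncard {i : Fin k | c ∈ A.line i} ≤ Set.ncard {i : Fin k | (i : ℕ) < q} := by
        rw [hS]
        exact le_of_eq hmultc
      exact Set.eq_of_subset_of_ncard_le (fun i hi => hc i hi) hle (Set.toFinite _)
    intro i
    constructor
    · intro h
      have : i ∈ {i : Fin k | (i : ℕ) < q} := heq ▸ h
      exact this
    · intro h; exact hc i h
  constructor
  · -- forward: induced cycle → no common point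
    rintro ⟨e⟩
    by_contra hne
    obtain ⟨d, hd⟩ := Set.nonempty_iff_ne_empty.mpr hne
    rw [Set.mem_sep_iff] at hd
    refine (LineArrangement.no_induced_cycle_ten c d ?_ e)
    intro i
    by_cases h : (i : ℕ) < q
    · exact Or.inl (hc i h)
    · exact Or.inr (hd.2 i (le_of_not_gt h))
  · -- backward: no common point → induced cycle
    intro hempty
    have hno : ∀ p, p ∈ A.sing → ¬ (∀ i : Fin k, q ≤ (i : ℕ) → p ∈ A.line i) := by
      intro p hp hall
      have : p ∈ {p ∈ A.sing | ∀ i : Fin k, q ≤ (i : ℕ) → p ∈ A.line i} := ⟨hp, hall⟩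
      rw [hempty] at this
      exact this
    have hcsing : c ∈ A.sing := by
      show 2 ≤ A.mult c
      rw [hmultc]
      omega
    have hqk' : q < k := by
      by_contra h
      exact hno c hcsing (fun i hi => absurd (lt_of_lt_of_le i.isLt (not_lt.mp h)) (by omega))
    set iq : Fin k := ⟨q, hqk'⟩ with hiq
    have hq1k : q + 1 < k := by
      by_contra h
      obtain ⟨x, hx0, hxq⟩ := lines_intersect (A.isLine ⟨0, by omega⟩) (A.isLine iq)
      have hne0q : (⟨0, by omega⟩ : Fin k) ≠ iq := by
        intro hh; have := congrArg Fin.val hh; simp [hiq] at this; omega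
      have hxs : x ∈ A.sing := LineArrangement.mem_sing_of_two hne0q hx0 hxq
      refine hno x hxs (fun i hi => ?_)
      have : (i : ℕ) = q := by have := i.isLt; omega
      have : i = iq := Fin.ext this
      rw [this]; exact hxq
    set iq1 : Fin k := ⟨q + 1, hq1k⟩ with hiq1
    have hiqiq1 : iq ≠ iq1 := by
      intro hh; have := congrArg Fin.val hh; simp [hiq, hiq1] at this
    obtain ⟨d, hdA, hdB⟩ := lines_intersect (A.isLine iq) (A.isLine iq1)
    have hdsing : d ∈ A.sing := LineArrangement.mem_sing_of_two hiqiq1 hdA hdB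
    have := hno d hdsing
    push_neg at this
    obtain ⟨i3, hi3q, hdC⟩ := this
    have hiqi3 : iq ≠ i3 := fun h => hdC (h ▸ hdA)
    have hiq1i3 : iq1 ≠ i3 := fun h => hdC (h ▸ hdB)
    obtain ⟨v, hvB, hvC⟩ := lines_intersect (A.isLine iq1) (A.isLine i3)
    obtain ⟨w, hwA, hwC⟩ := lines_intersect (A.isLine iq) (A.isLine i3)
    -- c is not on the three non-pencil lines
    have hcA : c ∉ A.line iq := fun h => by have := (hcq iq).mp h; simp [hiq] at this
    have hcB : c ∉ A.line iq1 := fun h => by have := (hcq iq1).mp h; simp [hiq1] at this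
    have hcC : c ∉ A.line i3 := fun h => by have := (hcq i3).mp h; omega
    have hdc : d ≠ c := fun h => hcA (h ▸ hdA)
    have hvc : v ≠ c := fun h => hcB (h ▸ hvB)
    have hwc : w ≠ c := fun h => hcA (h ▸ hwA)
    -- bad pencil indices
    set Bu : Set (Fin k) := {i | (i : ℕ) < q ∧ d ∈ A.line i} with hBu
    set Bv : Set (Fin k) := {i | (i : ℕ) < q ∧ v ∈ A.line i} with hBv
    set Bw : Set (Fin k) := {i | (i : ℕ) < q ∧ w ∈ A.line i} with hBw
    have hsub : ∀ (x : ProjPoint), x ≠ c →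
        Set.Subsingleton {i : Fin k | (i : ℕ) < q ∧ x ∈ A.line i} := by
      intro x hx i hi i' hi'
      by_contra hii
      exact hx (LineArrangement.point_eq_point hii hi.2 hi'.2 (hc i hi.1) (hc i' hi'.1))
    have hBad : (Bu ∪ (Bv ∪ Bw)).ncard ≤ 3 := by
      have h1 := Set.subsingleton_ncard_le_one (hsub d hdc)
      have h2 := Set.subsingleton_ncard_le_one (hsub v hvc)
      have h3 := Set.subsingleton_ncard_le_one (hsub w hwc)
      have := Set.ncard_union_le Bu (Bv ∪ Bw)
      have := Set.ncard_union_le Bv Bw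
      rw [← hBu, ← hBv, ← hBw] at *
      omega
    have hdiff : 1 < ({i : Fin k | (i : ℕ) < q} \ (Bu ∪ (Bv ∪ Bw))).ncard := by
      have := Set.ncard_le_ncard_diff_add_ncard {i : Fin k | (i : ℕ) < q} (Bu ∪ (Bv ∪ Bw))
        (Set.toFinite _)
      omega
    obtain ⟨a, b, ha, hb, hab⟩ := (Set.one_lt_ncard_iff (Set.toFinite _)).mp hdiff
    obtain ⟨haq, haBad⟩ := ha
    obtain ⟨hbq, hbBad⟩ := hb
    simp only [hBu, hBv, hBw, Set.mem_union, Set.mem_setOf_eq, not_or, not_and] at haBad hbBad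
    have haq' : (a : ℕ) < q := haq
    have hbq' : (b : ℕ) < q := hbq
    have hda : d ∉ A.line a := haBad.1 haq'
    have hva : v ∉ A.line a := haBad.2.1 haq'
    have hwa : w ∉ A.line a := haBad.2.2 haq'
    have hdb : d ∉ A.line b := hbBad.1 hbq'
    have hvb : v ∉ A.line b := hbBad.2.1 hbq'
    have hwb : w ∉ A.line b := hbBad.2.2 hbq'
    have hca : c ∈ A.line a := hc a haq'
    have hcb : c ∈ A.line b := hc b hbq'
    -- index distinctness
    have haiq : a ≠ iq := by intro h; rw [h] at haq'; simp [hiq] at haq'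
    have haiq1 : a ≠ iq1 := by intro h; rw [h] at haq'; simp [hiq1] at haq'
    have hai3 : a ≠ i3 := by intro h; rw [h] at haq'; omega
    have hbiq : b ≠ iq := by intro h; rw [h] at hbq'; simp [hiq] at hbq'
    have hbiq1 : b ≠ iq1 := by intro h; rw [h] at hbq'; simp [hiq1] at hbq'
    have hbi3 : b ≠ i3 := by intro h; rw [h] at hbq'; omega
    -- pentagon points
    obtain ⟨x1, hx1a, hx1A⟩ := lines_intersect (A.isLine a) (A.isLine iq)
    obtain ⟨x2, hx2A, hx2b⟩ := lines_intersect (A.isLine iq) (A.isLine b)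
    obtain ⟨x3, hx3b, hx3B⟩ := lines_intersect (A.isLine b) (A.isLine iq1)
    obtain ⟨x5, hx5C, hx5a⟩ := lines_intersect (A.isLine i3) (A.isLine a)
    -- non-incidences
    have n1 : x1 ∉ A.line b := fun h =>
      hcA ((LineArrangement.point_eq_point hab hx1a h hca hcb) ▸ hx1A)
    have n2 : x1 ∉ A.line iq1 := fun h =>
      hda ((LineArrangement.point_eq_point hiqiq1 hx1A h hdA hdB) ▸ hx1a)
    have n3 : x1 ∉ A.line i3 := fun h =>
      hwa ((LineArrangement.point_eq_point hiqi3 hx1A h hwA hwC) ▸ hx1a)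
    have n4 : x2 ∉ A.line a := fun h =>
      hcA ((LineArrangement.point_eq_point hab h hx2b hca hcb) ▸ hx2A)
    have n5 : x2 ∉ A.line iq1 := fun h =>
      hdb ((LineArrangement.point_eq_point hiqiq1 hx2A h hdA hdB) ▸ hx2b)
    have n6 : x2 ∉ A.line i3 := fun h =>
      hwb ((LineArrangement.point_eq_point hiqi3 hx2A h hwA hwC) ▸ hx2b)
    have n7 : x3 ∉ A.line a := fun h =>
      hcB ((LineArrangement.point_eq_point hab h hx3b hca hcb) ▸ hx3B)
    have n8 : x3 ∉ A.line iq := fun h =>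
      hdb ((LineArrangement.point_eq_point hiqiq1 h hx3B hdA hdB) ▸ hx3b)
    have n9 : x3 ∉ A.line i3 := fun h =>
      hvb ((LineArrangement.point_eq_point hiq1i3 hx3B h hvB hvC) ▸ hx3b)
    have n12 : v ∉ A.line iq := fun h =>
      hdC ((LineArrangement.point_eq_point hiqiq1 h hvB hdA hdB) ▸ hvC)
    have n13 : x5 ∉ A.line b := fun h =>
      hcC ((LineArrangement.point_eq_point hab hx5a h hca hcb) ▸ hx5C)
    have n14 : x5 ∉ A.line iq := fun h =>
      hwa ((LineArrangement.point_eq_point hiqi3 h hx5C hwA hwC) ▸ hx5a)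
    have n15 : x5 ∉ A.line iq1 := fun h =>
      hva ((LineArrangement.point_eq_point hiq1i3 h hx5C hvB hvC) ▸ hx5a)
    -- point distinctness
    have ne12 : x1 ≠ x2 := fun h => n1 (h ▸ hx2b)
    have ne13 : x1 ≠ x3 := fun h => n1 (h ▸ hx3b)
    have ne14 : x1 ≠ v := fun h => n2 (h ▸ hvB)
    have ne15 : x1 ≠ x5 := fun h => n3 (h ▸ hx5C)
    have ne23 : x2 ≠ x3 := fun h => n5 (h ▸ hx3B)
    have ne24 : x2 ≠ v := fun h => n6 (h ▸ hvC)
    have ne25 : x2 ≠ x5 := fun h => n6 (h ▸ hx5C)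
    have ne34 : x3 ≠ v := fun h => n9 (h ▸ hvC)
    have ne35 : x3 ≠ x5 := fun h => n9 (h ▸ hx5C)
    have ne45 : v ≠ x5 := fun h => hva (h ▸ hx5a)
    -- sing membership
    have s1 : x1 ∈ A.sing := LineArrangement.mem_sing_of_two haiq hx1a hx1A
    have s2 : x2 ∈ A.sing := LineArrangement.mem_sing_of_two (Ne.symm hbiq) hx2A hx2b
    have s3 : x3 ∈ A.sing := LineArrangement.mem_sing_of_two hbiq1 hx3b hx3B
    have s4 : v ∈ A.sing := LineArrangement.mem_sing_of_two hiq1i3 hvB hvC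
    have s5 : x5 ∈ A.sing := LineArrangement.mem_sing_of_two (Ne.symm hai3) hx5C hx5a
    have haiq1' := haiq1.symm; have hai3' := hai3.symm; have hbiq' := hbiq.symm
    have hbiq1' := hbiq1.symm; have hbi3' := hbi3.symm; have haiq' := haiq.symm
    have hab' := hab.symm; have hiqiq1' := hiqiq1.symm; have hiqi3' := hiqi3.symm
    have hiq1i3' := hiq1i3.symm
    have ne12' := ne12.symm; have ne13' := ne13.symm; have ne14' := ne14.symm
    have ne15' := ne15.symm; have ne23' := ne23.symm; have ne24' := ne24.symm
    have ne25' := ne25.symm; have ne34' := ne34.symm; have ne35' := ne35.symm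
    have ne45' := ne45.symm
    refine A.buildPentagon ![a, iq, b, iq1, i3] ?_ ![x1, x2, x3, v, x5] ?_ ?_ ?_
    · intro s t hst
      fin_cases s <;> fin_cases t <;>
        simp only [Matrix.cons_val_zero, Matrix.cons_val_one, Matrix.head_cons,
          Matrix.cons_val_two, Matrix.tail_cons, Matrix.cons_val_three,
          Matrix.cons_val_four, Matrix.cons_val_succ] at hst <;>
        first | rfl | exact absurd hst (by assumption)
    · intro s t hst
      fin_cases s <;> fin_cases t <;>
        simp only [Matrix.cons_val_zero, Matrix.cons_val_one, Matrix.head_cons,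
          Matrix.cons_val_two, Matrix.tail_cons, Matrix.cons_val_three,
          Matrix.cons_val_four, Matrix.cons_val_succ] at hst <;>
        first | rfl | exact absurd hst (by assumption)
    · intro s
      fin_cases s <;>
        simp only [Matrix.cons_val_zero, Matrix.cons_val_one, Matrix.head_cons,
          Matrix.cons_val_two, Matrix.tail_cons, Matrix.cons_val_three,
          Matrix.cons_val_four, Matrix.cons_val_succ] <;>
        assumption
    · intro s t
      fin_cases s <;> fin_cases t <;>
        simp only [Matrix.cons_val_zero, Matrix.cons_val_one, Matrix.head_cons,
          Matrix.cons_val_two, Matrix.tail_cons, Matrix.cons_val_three,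
          Matrix.cons_val_four, Matrix.cons_val_succ] <;>
        first
          | exact iff_of_true (by assumption) (by decide)
          | exact iff_of_false (by assumption) (by decide)
end

section
/- Let L be a line arrangement of k distinct lines in the complex projective plane with k even, k ≥ 4, t_3(L) ≠ 0 and t_r(L) = 0 for all r > 3, and suppose at least one line of L contains more than one double point (point of multiplicity 2). Then the Levi graph G(L) contains an induced cycle of length 2i for every integer i with 3 ≤ i ≤ ⌊(k+11)/4⌋. -/
open scoped LinearAlgebra.Projectivization
open Projectivization

section Geometry
open Module

lemma ker_finrank_two {f : (Fin 3 → ℂ) →ₗ[ℂ] ℂ} (hf : f ≠ 0) :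
    finrank ℂ (LinearMap.ker f) = 2 := by
  have h3 : finrank ℂ (Fin 3 → ℂ) = 3 := by simp
  have := Module.Dual.finrank_ker_add_one_of_ne_zero hf
  omega

lemma lines_meet {L M : Set ProjPoint} (hL : IsProjLine L) (hM : IsProjLine M) :
    ∃ p, p ∈ L ∧ p ∈ M := by
  obtain ⟨f, hf, rfl⟩ := hL
  obtain ⟨g, hg, rfl⟩ := hM
  have h3 : finrank ℂ (Fin 3 → ℂ) = 3 := by simp
  have hfin : 0 < finrank ℂ ↥(LinearMap.ker f ⊓ LinearMap.ker g) := by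
    have h1 := Submodule.finrank_sup_add_finrank_inf_eq (LinearMap.ker f) (LinearMap.ker g)
    have hsup : finrank ℂ ↥(LinearMap.ker f ⊔ LinearMap.ker g) ≤ 3 :=
      le_trans (Submodule.finrank_le _) (le_of_eq h3)
    rw [ker_finrank_two hf, ker_finrank_two hg] at h1
    omega
  have hne : (LinearMap.ker f ⊓ LinearMap.ker g) ≠ ⊥ := by
    intro h
    rw [h] at hfin
    simp at hfin
  obtain ⟨v, hv, hv0⟩ := Submodule.exists_mem_ne_zero_of_ne_bot hne
  refine ⟨Projectivization.mk ℂ v hv0, ?_, ?_⟩ <;>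
    simp only [Set.mem_setOf_eq, submodule_mk, Submodule.span_singleton_le_iff_mem]
  · exact hv.1
  · exact hv.2

lemma lines_unique_pt {L M : Set ProjPoint} (hL : IsProjLine L) (hM : IsProjLine M)
    (hLM : L ≠ M) {p q : ProjPoint} (hpL : p ∈ L) (hpM : p ∈ M) (hqL : q ∈ L) (hqM : q ∈ M) :
    p = q := by
  by_contra hpq
  obtain ⟨f, hf, rfl⟩ := hL
  obtain ⟨g, hg, rfl⟩ := hM
  simp only [Set.mem_setOf_eq] at hpL hpM hqL hqM
  apply hLM
  suffices h : LinearMap.ker f = LinearMap.ker g by rw [h]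
  have hsub : p.submodule ≠ q.submodule := fun h => hpq (submodule_injective h)
  set W := p.submodule ⊔ q.submodule with hW
  have hinf : p.submodule ⊓ q.submodule = ⊥ := by
    by_contra hb
    have h1 : p.submodule ⊓ q.submodule = p.submodule := by
      apply Submodule.eq_of_le_of_finrank_le inf_le_left
      rw [finrank_submodule]
      have : Nontrivial ↥(p.submodule ⊓ q.submodule) :=
        Submodule.nontrivial_iff_ne_bot.mpr hb
      exact Module.finrank_pos
    have h2 : p.submodule ⊓ q.submodule = q.submodule := by
      apply Submodule.eq_of_le_of_finrank_le inf_le_right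
      rw [finrank_submodule]
      have : Nontrivial ↥(p.submodule ⊓ q.submodule) :=
        Submodule.nontrivial_iff_ne_bot.mpr hb
      exact Module.finrank_pos
    exact hsub (h1 ▸ h2)
  have hWrank : finrank ℂ ↥W = 2 := by
    have := Submodule.finrank_sup_add_finrank_inf_eq p.submodule q.submodule
    rw [hinf, finrank_submodule, finrank_submodule] at this
    simpa using this
  have hWf : W = LinearMap.ker f :=
    (Submodule.eq_of_le_of_finrank_le (sup_le hpL hqL)
      (le_of_eq ((ker_finrank_two hf).trans hWrank.symm)))
  have hWg : W = LinearMap.ker g :=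
    (Submodule.eq_of_le_of_finrank_le (sup_le hpM hqM)
      (le_of_eq ((ker_finrank_two hg).trans hWrank.symm)))
  rw [← hWf, ← hWg]

end Geometry

namespace LineArrangement

variable {k : ℕ} (A : LineArrangement k)

noncomputable instance : Nonempty ProjPoint := by
  infer_instance

/-- The intersection point of lines `i` and `j`. -/
noncomputable def meet (i j : Fin k) : ProjPoint :=
  if h : i = j then Classical.arbitrary _
  else (lines_meet (A.isLine i) (A.isLine j)).choose

lemma line_ne {i j : Fin k} (h : i ≠ j) : A.line i ≠ A.line j :=
  fun e => h (A.inj e)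

lemma meet_mem_left {i j : Fin k} (h : i ≠ j) : A.meet i j ∈ A.line i := by
  rw [meet, dif_neg h]
  exact (lines_meet (A.isLine i) (A.isLine j)).choose_spec.1

lemma meet_mem_right {i j : Fin k} (h : i ≠ j) : A.meet i j ∈ A.line j := by
  rw [meet, dif_neg h]
  exact (lines_meet (A.isLine i) (A.isLine j)).choose_spec.2

lemma eq_meet {i j : Fin k} (h : i ≠ j) {p : ProjPoint}
    (hpi : p ∈ A.line i) (hpj : p ∈ A.line j) : p = A.meet i j :=
  lines_unique_pt (A.isLine i) (A.isLine j) (A.line_ne h) hpi hpj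
    (A.meet_mem_left h) (A.meet_mem_right h)

lemma unique_pt {i j : Fin k} (h : i ≠ j) {p q : ProjPoint}
    (hpi : p ∈ A.line i) (hpj : p ∈ A.line j) (hqi : q ∈ A.line i) (hqj : q ∈ A.line j) :
    p = q := by
  rw [A.eq_meet h hpi hpj, A.eq_meet h hqi hqj]

-- ## thru
open Classical in
/-- The set of lines through a point, as a Finset. -/
noncomputable def thru (p : ProjPoint) : Finset (Fin k) :=
  Finset.univ.filter (fun m => p ∈ A.line m)

lemma mem_thru {p : ProjPoint} {m : Fin k} : m ∈ A.thru p ↔ p ∈ A.line m := by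
  simp [thru]

lemma card_thru (p : ProjPoint) : (A.thru p).card = A.mult p := by
  rw [mult]
  have : {i : Fin k | p ∈ A.line i} = ↑(A.thru p) := by
    ext m; simp [mem_thru]
  rw [this, Set.ncard_coe_finset]

lemma two_le_mult {p : ProjPoint} {i j : Fin k} (hij : i ≠ j)
    (hi : p ∈ A.line i) (hj : p ∈ A.line j) : 2 ≤ A.mult p := by
  rw [← A.card_thru]
  have : ({i, j} : Finset (Fin k)) ⊆ A.thru p := by
    intro m hm
    simp only [Finset.mem_insert, Finset.mem_singleton] at hm
    rcases hm with rfl | rfl <;> rw [mem_thru] <;> assumption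
  calc 2 = ({i, j} : Finset (Fin k)).card := by rw [Finset.card_insert_of_notMem (by simpa), Finset.card_singleton]
  _ ≤ _ := Finset.card_le_card this

lemma mem_sing {p : ProjPoint} {i j : Fin k} (hij : i ≠ j)
    (hi : p ∈ A.line i) (hj : p ∈ A.line j) : p ∈ A.sing :=
  A.two_le_mult hij hi hj

/-- Singular points are finite: they are among the pairwise intersection points. -/
lemma mult_set_finite {r : ℕ} (hr2 : 2 ≤ r) : {p : ProjPoint | A.mult p = r}.Finite := by
  apply Set.Finite.subset (Set.finite_range (fun ij : Fin k × Fin k => A.meet ij.1 ij.2))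
  intro p hp
  simp only [Set.mem_setOf_eq] at hp
  have h2 : 2 ≤ (A.thru p).card := by rw [card_thru, hp]; exact hr2
  obtain ⟨i, hi, j, hj, hij⟩ := Finset.one_lt_card.mp h2
  exact ⟨(i, j), (A.eq_meet hij (A.mem_thru.mp hi) (A.mem_thru.mp hj)).symm⟩

lemma mult_le_three (hr : ∀ r : ℕ, 3 < r → A.t r = 0) {p : ProjPoint}
    (hp : 2 ≤ A.mult p) : A.mult p ≤ 3 := by
  by_contra h
  push_neg at h
  have h0 := hr (A.mult p) h
  rw [t] at h0
  have hfin := A.mult_set_finite (r := A.mult p) (by omega)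
  have : p ∈ {q : ProjPoint | A.mult q = A.mult p} := rfl
  have := Set.ncard_eq_zero hfin |>.mp h0
  rw [this] at this
  simp_all

lemma thru_card_le_three (hr : ∀ r : ℕ, 3 < r → A.t r = 0) {p : ProjPoint} {i j : Fin k}
    (hij : i ≠ j) (hi : p ∈ A.line i) (hj : p ∈ A.line j) : (A.thru p).card ≤ 3 := by
  rw [card_thru]
  exact A.mult_le_three hr (A.two_le_mult hij hi hj)

lemma thru_eq_pair {p : ProjPoint} {i j : Fin k} (hij : i ≠ j)
    (hi : p ∈ A.line i) (hj : p ∈ A.line j) (h2 : A.mult p = 2) :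
    A.thru p = {i, j} := by
  symm
  apply Finset.eq_of_subset_of_card_le
  · intro m hm
    simp only [Finset.mem_insert, Finset.mem_singleton] at hm
    rcases hm with rfl | rfl <;> rw [mem_thru] <;> assumption
  · rw [card_thru, h2, Finset.card_insert_of_notMem (by simpa), Finset.card_singleton]

/-- key counting fact: at most one line through `meet a b` outside a set containing `a, b`. -/
lemma thru_meet_sdiff (hr : ∀ r : ℕ, 3 < r → A.t r = 0) {a b : Fin k} (hab : a ≠ b)
    {S : Finset (Fin k)} (ha : a ∈ S) (hb : b ∈ S) :
    (A.thru (A.meet a b) \ S).card ≤ 1 := by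
  have hsub : ({a, b} : Finset (Fin k)) ⊆ A.thru (A.meet a b) ∩ S := by
    intro m hm
    simp only [Finset.mem_insert, Finset.mem_singleton] at hm
    rcases hm with rfl | rfl <;> rw [Finset.mem_inter, mem_thru] <;>
      exact ⟨by first | exact A.meet_mem_left hab | exact A.meet_mem_right hab, by assumption⟩
  have h2 : 2 ≤ (A.thru (A.meet a b) ∩ S).card := by
    calc 2 = ({a, b} : Finset (Fin k)).card := by
            rw [Finset.card_insert_of_notMem (by simpa), Finset.card_singleton]
    _ ≤ _ := Finset.card_le_card hsub
  have h3 : (A.thru (A.meet a b)).card ≤ 3 :=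
    A.thru_card_le_three hr hab (A.meet_mem_left hab) (A.meet_mem_right hab)
  have := Finset.card_sdiff_add_card_inter (A.thru (A.meet a b)) S
  omega

end LineArrangement


lemma mod_small_cases (a N : ℕ) (h : a < 2 * N) :
    a % N = if a < N then a else a - N := by
  split
  · exact Nat.mod_eq_of_lt (by omega)
  · rcases Nat.eq_zero_or_pos N with rfl | h0
    · simp
    · rw [Nat.mod_eq_sub_mod (by omega), Nat.mod_eq_of_lt (by omega)]

lemma cycle_adj_iff {N : ℕ} (u v : Fin N) :
    (SimpleGraph.cycleGraph N).Adj u v ↔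
      ((N - v.val + u.val) % N = 1 ∨ (N - u.val + v.val) % N = 1) := by
  rw [SimpleGraph.cycleGraph_adj']
  constructor
  · rintro (h | h) <;> [left; right] <;> rw [← h, Fin.sub_def]
  · rintro (h | h) <;> [left; right] <;> rw [Fin.sub_def] <;> exact h

namespace LineArrangement

lemma cycle_builder {k : ℕ} (A : LineArrangement k) (n3 : ℕ) (h3 : 3 ≤ n3)
    (L : ℕ → Fin k) (P : ℕ → ProjPoint)
    (hLinj : ∀ s < n3, ∀ t < n3, L s = L t → s = t)
    (hsing : ∀ s, s < n3 → P s ∈ A.sing)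
    (hmaster : ∀ s < n3, ∀ m < n3, (P s ∈ A.line (L m) ↔ m = s ∨ m = (s + 1) % n3)) :
    HasInducedCycle A.levi (2 * n3) := by
  have hPinj : ∀ s < n3, ∀ t < n3, P s = P t → s = t := by
    intro s hs t ht hst
    have h1 : P t ∈ A.line (L s) := by
      rw [← hst]; exact (hmaster s hs s hs).mpr (Or.inl rfl)
    have h2 : P s ∈ A.line (L t) := by
      rw [hst]; exact (hmaster t ht t ht).mpr (Or.inl rfl)
    have e1 := (hmaster t ht s hs).mp h1
    have e2 := (hmaster s hs t ht).mp h2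
    rw [mod_small_cases _ _ (by omega)] at e1 e2
    split at e1 <;> split at e2 <;> omega
  set N := 2 * n3 with hN
  have hdiv : ∀ v : Fin N, v.val / 2 < n3 := fun v => by have := v.isLt; omega
  let e : Fin N → ↥A.sing ⊕ Fin k := fun v =>
    if h : v.val % 2 = 0 then Sum.inr (L (v.val / 2))
    else Sum.inl ⟨P (v.val / 2), hsing _ (hdiv v)⟩
  have he_even : ∀ v : Fin N, v.val % 2 = 0 → e v = Sum.inr (L (v.val / 2)) := by
    intro v h; simp only [e, dif_pos h]
  have he_odd : ∀ v : Fin N, ¬ (v.val % 2 = 0) → e v = Sum.inl ⟨P (v.val / 2), hsing _ (hdiv v)⟩ := by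
    intro v h; simp only [e, dif_neg h]
  have einj : Function.Injective e := by
    intro u v huv
    by_cases hu : u.val % 2 = 0 <;> by_cases hv : v.val % 2 = 0
    · rw [he_even u hu, he_even v hv] at huv
      have := hLinj _ (hdiv u) _ (hdiv v) (Sum.inr.inj huv)
      exact Fin.ext (by omega)
    · rw [he_even u hu, he_odd v hv] at huv; exact absurd huv (by simp)
    · rw [he_odd u hu, he_even v hv] at huv; exact absurd huv (by simp)
    · rw [he_odd u hu, he_odd v hv] at huv
      have := hPinj _ (hdiv u) _ (hdiv v) (congrArg Subtype.val (Sum.inl.inj huv))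
      exact Fin.ext (by omega)
  refine ⟨⟨⟨e, einj⟩, ?_⟩⟩
  intro u v
  show A.levi.Adj (e u) (e v) ↔ _
  rw [cycle_adj_iff]
  have hu' := u.isLt
  have hv' := v.isLt
  rw [mod_small_cases (N - v.val + u.val) N (by omega),
      mod_small_cases (N - u.val + v.val) N (by omega)]
  by_cases hu : u.val % 2 = 0 <;> by_cases hv : v.val % 2 = 0
  · rw [he_even u hu, he_even v hv]
    constructor
    · intro h; exact absurd h (by simp [levi])
    · intro h; exfalso; revert h; split_ifs <;> omega
  · rw [he_even u hu, he_odd v hv]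
    have hlv : A.levi.Adj (Sum.inr (L (u.val / 2))) (Sum.inl ⟨P (v.val / 2), hsing _ (hdiv v)⟩)
        ↔ P (v.val / 2) ∈ A.line (L (u.val / 2)) := Iff.rfl
    rw [hlv, hmaster _ (hdiv v) _ (hdiv u)]
    rw [mod_small_cases (v.val / 2 + 1) n3 (by omega)]
    split_ifs <;> omega
  · rw [he_odd u hu, he_even v hv]
    have hlv : A.levi.Adj (Sum.inl ⟨P (u.val / 2), hsing _ (hdiv u)⟩) (Sum.inr (L (v.val / 2)))
        ↔ P (u.val / 2) ∈ A.line (L (v.val / 2)) := Iff.rfl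
    rw [hlv, hmaster _ (hdiv u) _ (hdiv v)]
    rw [mod_small_cases (u.val / 2 + 1) n3 (by omega)]
    split_ifs <;> omega
  · rw [he_odd u hu, he_odd v hv]
    constructor
    · intro h; exact absurd h (by simp [levi])
    · intro h; exfalso; revert h; split_ifs <;> omega

end LineArrangement

/-- the sequence of "left ends": `e 0 = m1`, `e (s+1) = c s`. -/
def eSeq {k : ℕ} (m1 : Fin k) (c : ℕ → Fin k) : ℕ → Fin k
  | 0 => m1
  | s + 1 => c s

/-- the chain intersection points. -/
noncomputable def xSeq {k : ℕ} (A : LineArrangement k) (m1 : Fin k) (c : ℕ → Fin k) (s : ℕ) :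
    ProjPoint :=
  A.meet (eSeq m1 c s) (eSeq m1 c (s + 1))

/-- the chosen lines after `j` steps. -/
def chS {k : ℕ} (i0 m1 m2 : Fin k) (c : ℕ → Fin k) (j : ℕ) : Finset (Fin k) :=
  insert i0 (insert m1 (insert m2 ((Finset.range j).image c)))

/-- distinctness part of the invariant. -/
def chDist {k : ℕ} (i0 m1 m2 : Fin k) (c : ℕ → Fin k) (j : ℕ) : Prop :=
  ∀ s < j, (c s ≠ i0 ∧ c s ≠ m1 ∧ c s ≠ m2) ∧ ∀ t < s, c t ≠ c s

/-- the full invariant. -/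
def chInv {k : ℕ} (A : LineArrangement k) (i0 m1 m2 : Fin k) (c : ℕ → Fin k) (j : ℕ) : Prop :=
  chDist i0 m1 m2 c j
  ∧ (∀ s < j, ∀ m ∈ chS i0 m1 m2 c j, m ≠ eSeq m1 c s → m ≠ eSeq m1 c (s + 1) →
      xSeq A m1 c s ∉ A.line m)
  ∧ (∀ m ∈ chS i0 m1 m2 c j, m ≠ m2 → m ≠ eSeq m1 c j → A.meet m2 (eSeq m1 c j) ∉ A.line m)

section GreedyLemmas

variable {k : ℕ} {A : LineArrangement k} {i0 m1 m2 : Fin k} {c : ℕ → Fin k} {j : ℕ}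

lemma mem_chS_i0 : i0 ∈ chS i0 m1 m2 c j := by simp [chS]
lemma mem_chS_m1 : m1 ∈ chS i0 m1 m2 c j := by simp [chS]
lemma mem_chS_m2 : m2 ∈ chS i0 m1 m2 c j := by simp [chS]
lemma mem_chS_c {s : ℕ} (hs : s < j) : c s ∈ chS i0 m1 m2 c j := by
  simp only [chS, Finset.mem_insert, Finset.mem_image, Finset.mem_range]
  exact Or.inr (Or.inr (Or.inr ⟨s, hs, rfl⟩))

lemma eSeq_mem_chS {s : ℕ} (hs : s ≤ j) : eSeq m1 c s ∈ chS i0 m1 m2 c j := by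
  cases s with
  | zero => exact mem_chS_m1
  | succ s => exact mem_chS_c (by omega)

lemma mem_chS_iff {m : Fin k} :
    m ∈ chS i0 m1 m2 c j ↔ m = i0 ∨ m = m1 ∨ m = m2 ∨ ∃ s < j, c s = m := by
  simp only [chS, Finset.mem_insert, Finset.mem_image, Finset.mem_range]

lemma eSeq_ne_i0 (hd : chDist i0 m1 m2 c j) (hm1 : m1 ≠ i0) {s : ℕ} (hs : s ≤ j) :
    eSeq m1 c s ≠ i0 := by
  cases s with
  | zero => exact hm1
  | succ s => exact ((hd s (by omega)).1).1

lemma eSeq_ne_m2 (hd : chDist i0 m1 m2 c j) (hm12 : m1 ≠ m2) {s : ℕ} (hs : s ≤ j) :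
    eSeq m1 c s ≠ m2 := by
  cases s with
  | zero => exact hm12
  | succ s => exact ((hd s (by omega)).1).2.2

lemma eSeq_inj (hd : chDist i0 m1 m2 c j) {s t : ℕ} (hs : s ≤ j) (ht : t ≤ j)
    (h : eSeq m1 c s = eSeq m1 c t) : s = t := by
  match s, t with
  | 0, 0 => rfl
  | 0, t + 1 => exact absurd h.symm ((hd t (by omega)).1).2.1
  | s + 1, 0 => exact absurd h ((hd s (by omega)).1).2.1
  | s + 1, t + 1 =>
    rcases Nat.lt_trichotomy s t with hlt | rfl | hlt
    · exact absurd h ((hd t (by omega)).2 s hlt)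
    · rfl
    · exact absurd h.symm ((hd s (by omega)).2 t hlt)

lemma card_chS (hd : chDist i0 m1 m2 c j) (hm1 : m1 ≠ i0) (hm2 : m2 ≠ i0) (hm12 : m1 ≠ m2) :
    (chS i0 m1 m2 c j).card = j + 3 := by
  have himg : ((Finset.range j).image c).card = j := by
    rw [Finset.card_image_of_injOn, Finset.card_range]
    intro s hs t ht h
    simp only [Finset.coe_range, Set.mem_Iio] at hs ht
    rcases Nat.lt_trichotomy s t with hlt | rfl | hlt
    · exact absurd h ((hd t ht).2 s hlt)
    · rfl
    · exact absurd h.symm ((hd s hs).2 t hlt)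
  have h2 : m2 ∉ (Finset.range j).image c := by
    simp only [Finset.mem_image, Finset.mem_range]
    rintro ⟨s, hs, h⟩; exact ((hd s hs).1).2.2 h
  have h1 : m1 ∉ insert m2 ((Finset.range j).image c) := by
    simp only [Finset.mem_insert, Finset.mem_image, Finset.mem_range]
    rintro (h | ⟨s, hs, h⟩)
    · exact hm12 h
    · exact ((hd s hs).1).2.1 h
  have h0 : i0 ∉ insert m1 (insert m2 ((Finset.range j).image c)) := by
    simp only [Finset.mem_insert, Finset.mem_image, Finset.mem_range]
    rintro (h | h | ⟨s, hs, h⟩)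
    · exact hm1 h.symm
    · exact hm2 h.symm
    · exact ((hd s hs).1).1 h
  rw [chS, Finset.card_insert_of_notMem h0, Finset.card_insert_of_notMem h1,
    Finset.card_insert_of_notMem h2, himg]

lemma eSeq_congr {c' : ℕ → Fin k} (hagree : ∀ s < j, c' s = c s) {s : ℕ} (hs : s ≤ j) :
    eSeq m1 c' s = eSeq m1 c s := by
  cases s with
  | zero => rfl
  | succ s => exact hagree s (by omega)

lemma xSeq_congr {c' : ℕ → Fin k} (hagree : ∀ s < j, c' s = c s) {s : ℕ} (hs : s < j) :
    xSeq A m1 c' s = xSeq A m1 c s := by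
  rw [xSeq, xSeq, eSeq_congr (j := j) hagree (by omega), eSeq_congr (j := j) hagree (by omega)]

lemma chS_congr {c' : ℕ → Fin k} (hagree : ∀ s < j, c' s = c s) :
    chS i0 m1 m2 c' j = chS i0 m1 m2 c j := by
  rw [chS, chS]
  congr 3
  apply Finset.image_congr
  intro s hs
  simp only [Finset.coe_range, Set.mem_Iio] at hs
  exact hagree s hs

lemma chS_succ : chS i0 m1 m2 c (j + 1) = insert (c j) (chS i0 m1 m2 c j) := by
  rw [chS, chS, Finset.range_add_one, Finset.image_insert]
  ext m
  simp only [Finset.mem_insert]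
  tauto

end GreedyLemmas

section Step

lemma exists_new_line {k : ℕ} (F : Finset (Fin k)) (h : F.card < k) : ∃ m : Fin k, m ∉ F := by
  have h2 : (Finset.univ \ F).Nonempty := by
    rw [← Finset.card_pos, Finset.card_sdiff_of_subset (Finset.subset_univ F), Finset.card_univ,
      Fintype.card_fin]
    omega
  obtain ⟨m, hm⟩ := h2
  exact ⟨m, (Finset.mem_sdiff.mp hm).2⟩

lemma chStep {k : ℕ} {A : LineArrangement k} {i0 m1 m2 : Fin k} {q : ProjPoint}
    (hr : ∀ r : ℕ, 3 < r → A.t r = 0)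
    (hm1 : m1 ≠ i0) (hm2 : m2 ≠ i0) (hm12 : m1 ≠ m2)
    (hq0 : q ∈ A.line i0) (hq2 : q ∈ A.line m2) (hqmult : A.mult q = 2)
    {c : ℕ → Fin k} {j : ℕ} (hInv : chInv A i0 m1 m2 c j) (hbud : 4 * j + 5 < k) :
    ∃ c' : ℕ → Fin k, (∀ s < j, c' s = c s) ∧ chInv A i0 m1 m2 c' (j + 1) := by
  classical
  obtain ⟨hd, hb, hdd⟩ := hInv
  set S := chS i0 m1 m2 c j with hS
  set ej := eSeq m1 c j with hej
  have hejS : ej ∈ S := eSeq_mem_chS le_rfl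
  have hejm2 : ej ≠ m2 := eSeq_ne_m2 hd hm12 le_rfl
  have heji0 : ej ≠ i0 := eSeq_ne_i0 hd hm1 le_rfl
  have hcardS : S.card = j + 3 := card_chS hd hm1 hm2 hm12
  -- forbidden points
  set P1 := (Finset.range j).image (xSeq A m1 c) with hP1
  set P2 := (S \ {ej}).image (fun m => A.meet ej m) with hP2
  set P3 := (S \ {m2, i0, ej}).image (fun m => A.meet m2 m) with hP3
  set P := P1 ∪ P2 ∪ P3 with hP
  set F := S ∪ P.biUnion (fun y => A.thru y) with hF
  -- counting
  have hone : ∀ y ∈ P, (A.thru y \ S).card ≤ 1 := by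
    intro y hy
    rw [hP, Finset.mem_union, Finset.mem_union] at hy
    rcases hy with (hy | hy) | hy
    · rw [hP1, Finset.mem_image] at hy
      obtain ⟨s, hs, rfl⟩ := hy
      rw [Finset.mem_range] at hs
      refine LineArrangement.thru_meet_sdiff A hr (fun h => ?_) (eSeq_mem_chS (by omega))
        (eSeq_mem_chS (by omega))
      have := eSeq_inj hd (s := s) (t := s + 1) (by omega) (by omega) h
      omega
    · rw [hP2, Finset.mem_image] at hy
      obtain ⟨m, hm, rfl⟩ := hy
      rw [Finset.mem_sdiff, Finset.mem_singleton] at hm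
      exact LineArrangement.thru_meet_sdiff A hr (fun h => hm.2 h.symm) hejS hm.1
    · rw [hP3, Finset.mem_image] at hy
      obtain ⟨m, hm, rfl⟩ := hy
      rw [Finset.mem_sdiff, Finset.mem_insert, Finset.mem_insert, Finset.mem_singleton] at hm
      exact LineArrangement.thru_meet_sdiff A hr (fun h => hm.2 (Or.inl h.symm)) mem_chS_m2 hm.1
  have hcardP : P.card ≤ 3 * j + 2 := by
    have h1 : P1.card ≤ j := le_trans Finset.card_image_le (by rw [Finset.card_range])
    have h2 : P2.card ≤ j + 2 := by
      refine le_trans Finset.card_image_le ?_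
      rw [Finset.card_sdiff_of_subset (by simpa using hejS)]
      simp [hcardS]
    have h3 : P3.card ≤ j := by
      refine le_trans Finset.card_image_le ?_
      have hsub : ({m2, i0, ej} : Finset (Fin k)) ⊆ S := by
        intro m hm
        simp only [Finset.mem_insert, Finset.mem_singleton] at hm
        rcases hm with rfl | rfl | rfl
        · exact mem_chS_m2
        · exact mem_chS_i0
        · exact hejS
      rw [Finset.card_sdiff_of_subset hsub]
      have : ({m2, i0, ej} : Finset (Fin k)).card = 3 := by
        rw [Finset.card_insert_of_notMem (by simp [hm2, Ne.symm hejm2]),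
          Finset.card_insert_of_notMem (by simp [Ne.symm heji0]), Finset.card_singleton]
      omega
    calc P.card ≤ (P1 ∪ P2).card + P3.card := Finset.card_union_le _ _
    _ ≤ P1.card + P2.card + P3.card := by
        have := Finset.card_union_le P1 P2
        omega
    _ ≤ 3 * j + 2 := by omega
  have hcardF : F.card < k := by
    have hsub : F ⊆ S ∪ P.biUnion (fun y => A.thru y \ S) := by
      intro m hm
      rw [hF, Finset.mem_union] at hm
      rcases hm with hm | hm
      · exact Finset.mem_union_left _ hm
      · rw [Finset.mem_biUnion] at hm
        obtain ⟨y, hy, hmy⟩ := hm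
        by_cases hmS : m ∈ S
        · exact Finset.mem_union_left _ hmS
        · exact Finset.mem_union_right _ (Finset.mem_biUnion.mpr ⟨y, hy, by
            rw [Finset.mem_sdiff]; exact ⟨hmy, hmS⟩⟩)
    have h1 : F.card ≤ S.card + (P.biUnion (fun y => A.thru y \ S)).card :=
      le_trans (Finset.card_le_card hsub) (Finset.card_union_le _ _)
    have h2 : (P.biUnion (fun y => A.thru y \ S)).card ≤ ∑ y ∈ P, (A.thru y \ S).card :=
      Finset.card_biUnion_le
    have h3 : ∑ y ∈ P, (A.thru y \ S).card ≤ P.card :=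
      le_trans (Finset.sum_le_card_nsmul P _ 1 hone) (by simp)
    omega
  obtain ⟨cj, hcj⟩ := exists_new_line F hcardF
  have hcjS : cj ∉ S := fun h => hcj (Finset.mem_union_left _ h)
  have hcjP : ∀ y ∈ P, y ∉ A.line cj := by
    intro y hy hline
    exact hcj (Finset.mem_union_right _ (Finset.mem_biUnion.mpr
      ⟨y, hy, (LineArrangement.mem_thru A).mpr hline⟩))
  -- the updated chain
  refine ⟨Function.update c j cj, fun s hs => Function.update_of_ne (by omega) _ _, ?_⟩
  set c' := Function.update c j cj with hc'
  have hagree : ∀ s < j, c' s = c s := fun s hs => Function.update_of_ne (by omega) _ _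
  have hc'j : c' j = cj := Function.update_self _ _ _
  have hEc : ∀ s ≤ j, eSeq m1 c' s = eSeq m1 c s := fun s hs => eSeq_congr hagree hs
  have hEcj : eSeq m1 c' (j + 1) = cj := hc'j
  have hXc : ∀ s < j, xSeq A m1 c' s = xSeq A m1 c s := fun s hs => xSeq_congr hagree hs
  have hXj : xSeq A m1 c' j = A.meet ej cj := by
    rw [xSeq, hEc j le_rfl, hEcj, hej]
  have hSS : chS i0 m1 m2 c' (j + 1) = insert cj S := by
    rw [chS_succ, hc'j, chS_congr hagree, hS]
  -- new line distinct from i0 m1 m2 and old lines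
  have hcj0 : cj ≠ i0 := fun h => hcjS (h ▸ mem_chS_i0)
  have hcj1 : cj ≠ m1 := fun h => hcjS (h ▸ mem_chS_m1)
  have hcj2 : cj ≠ m2 := fun h => hcjS (h ▸ mem_chS_m2)
  have hcjc : ∀ s < j, c s ≠ cj := fun s hs h => hcjS (h ▸ mem_chS_c hs)
  have hcjej : ej ≠ cj := fun h => hcjS (h ▸ hejS)
  refine ⟨?_, ?_, ?_⟩
  · -- distinctness
    intro s hs
    rcases Nat.lt_or_ge s j with hsj | hsj
    · rw [hagree s hsj]
      refine ⟨(hd s hsj).1, fun t ht => ?_⟩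
      rw [hagree t (by omega)]
      exact (hd s hsj).2 t ht
    · have hsj' : s = j := by omega
      subst hsj'
      rw [hc'j]
      exact ⟨⟨hcj0, hcj1, hcj2⟩, fun t ht => by rw [hagree t ht]; exact hcjc t ht⟩
  · -- property (b)
    intro s hs m hm hms hms1
    rw [hSS, Finset.mem_insert] at hm
    rcases Nat.lt_or_ge s j with hsj | hsj
    · rw [hXc s hsj]
      rw [hEc s (by omega)] at hms
      rw [hEc (s+1) (by omega)] at hms1
      rcases hm with rfl | hm
      · -- m = cj : new line avoids old points
        exact hcjP _ (Finset.mem_union_left _ (Finset.mem_union_left _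
          (Finset.mem_image_of_mem _ (Finset.mem_range.mpr hsj))))
      · exact hb s hsj m hm hms hms1
    · have hsj' : s = j := by omega
      rw [hsj'] at hms hms1 ⊢
      rw [hXj]
      rw [hEc j le_rfl, ← hej] at hms
      rw [hEcj] at hms1
      rcases hm with rfl | hm
      · exact absurd rfl hms1
      · -- m ∈ S, m ≠ ej, m ≠ cj : the new point avoids line m
        intro hmem
        have h1 : A.meet ej cj ∈ A.line ej := LineArrangement.meet_mem_left A hcjej
        have h2 : A.meet ej m ∈ A.line (eSeq m1 c j) := LineArrangement.meet_mem_left A (Ne.symm hms)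
        have heq : A.meet ej cj = A.meet ej m :=
          LineArrangement.unique_pt A (Ne.symm hms) h1 hmem
            (LineArrangement.meet_mem_left A (Ne.symm hms))
            (LineArrangement.meet_mem_right A (Ne.symm hms))
        have h3 : A.meet ej m ∈ A.line cj := by
          rw [← heq]; exact LineArrangement.meet_mem_right A hcjej
        refine hcjP (A.meet ej m) ?_ h3
        refine Finset.mem_union_left _ (Finset.mem_union_right _ ?_)
        rw [hP2, Finset.mem_image]
        exact ⟨m, by rw [Finset.mem_sdiff, Finset.mem_singleton]; exact ⟨hm, hms⟩, rfl⟩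
  · -- property (d)
    intro m hm hmm2 hmej
    rw [hEcj] at hmej ⊢
    rw [hSS, Finset.mem_insert] at hm
    rcases hm with rfl | hm
    · exact absurd rfl hmej
    intro hmem
    have hm2cj : m2 ≠ cj := Ne.symm hcj2
    have h1 : A.meet m2 cj ∈ A.line m2 := LineArrangement.meet_mem_left A hm2cj
    have heq : A.meet m2 cj = A.meet m2 m :=
      LineArrangement.unique_pt A (Ne.symm hmm2) h1 hmem
        (LineArrangement.meet_mem_left A (Ne.symm hmm2))
        (LineArrangement.meet_mem_right A (Ne.symm hmm2))
    have h3 : A.meet m2 m ∈ A.line cj := by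
      rw [← heq]; exact LineArrangement.meet_mem_right A hm2cj
    -- cases on m
    by_cases hmi0 : m = i0
    · rw [hmi0] at h3
      -- meet m2 i0 = q, whose lines are i0 and m2, but cj is neither
      have hqeq : A.meet m2 i0 = q :=
        (LineArrangement.unique_pt A hm2 (LineArrangement.meet_mem_left A hm2)
          (LineArrangement.meet_mem_right A hm2) hq2 hq0)
      rw [hqeq] at h3
      have hthis : cj ∈ A.thru q := (LineArrangement.mem_thru A).mpr h3
      rw [LineArrangement.thru_eq_pair A (Ne.symm hm2) hq0 hq2 hqmult] at hthis
      simp only [Finset.mem_insert, Finset.mem_singleton] at hthis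
      rcases hthis with h' | h'
      · exact hcj0 h'
      · exact hcj2 h'
    by_cases hmejx : m = ej
    · rw [hmejx] at h3
      -- meet m2 ej = meet ej m2 ∈ P2
      have heq2 : A.meet m2 ej = A.meet ej m2 :=
        LineArrangement.unique_pt A hejm2
          (LineArrangement.meet_mem_right A (Ne.symm hejm2))
          (LineArrangement.meet_mem_left A (Ne.symm hejm2))
          (LineArrangement.meet_mem_left A hejm2)
          (LineArrangement.meet_mem_right A hejm2)
      rw [heq2] at h3
      refine hcjP (A.meet ej m2) ?_ h3
      refine Finset.mem_union_left _ (Finset.mem_union_right _ ?_)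
      rw [hP2, Finset.mem_image]
      exact ⟨m2, by rw [Finset.mem_sdiff, Finset.mem_singleton]; exact ⟨mem_chS_m2, Ne.symm hejm2⟩,
        rfl⟩
    · refine hcjP (A.meet m2 m) ?_ h3
      refine Finset.mem_union_right _ ?_
      rw [hP3, Finset.mem_image]
      refine ⟨m, ?_, rfl⟩
      rw [Finset.mem_sdiff, Finset.mem_insert, Finset.mem_insert, Finset.mem_singleton]
      exact ⟨hm, by push_neg; exact ⟨hmm2, hmi0, hmejx⟩⟩

end Step

section BaseIter

lemma chBase {k : ℕ} {A : LineArrangement k} {i0 m1 m2 : Fin k} {q : ProjPoint}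
    (hm1 : m1 ≠ i0) (hm2 : m2 ≠ i0) (hm12 : m1 ≠ m2)
    (hq0 : q ∈ A.line i0) (hq2 : q ∈ A.line m2) (hqmult : A.mult q = 2) (c : ℕ → Fin k) :
    chInv A i0 m1 m2 c 0 := by
  refine ⟨fun s hs => absurd hs (by omega), fun s hs => absurd hs (by omega), ?_⟩
  intro m hm hmm2 hme
  rcases mem_chS_iff.mp hm with rfl | rfl | rfl | ⟨s, hs, _⟩
  · -- m = i0
    intro hmem
    have hm2m1 : m2 ≠ m1 := Ne.symm hm12
    have hqeq : A.meet m2 (eSeq m1 c 0) = q :=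
      LineArrangement.unique_pt A hm2 (LineArrangement.meet_mem_left A (by exact hm2m1)) hmem
        hq2 hq0
    have hq1 : q ∈ A.line m1 := by
      have := LineArrangement.meet_mem_right A hm2m1
      rw [show A.meet m2 m1 = A.meet m2 (eSeq m1 c 0) from rfl, hqeq] at this
      exact this
    have : m1 ∈ A.thru q := (LineArrangement.mem_thru A).mpr hq1
    rw [LineArrangement.thru_eq_pair A (Ne.symm hm2) hq0 hq2 hqmult] at this
    simp only [Finset.mem_insert, Finset.mem_singleton] at this
    rcases this with h' | h'
    · exact hm1 h'
    · exact hm12 h'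
  · exact absurd rfl hme
  · exact absurd rfl hmm2
  · omega

lemma chIter {k : ℕ} {A : LineArrangement k} {i0 m1 m2 : Fin k} {q : ProjPoint}
    (hr : ∀ r : ℕ, 3 < r → A.t r = 0)
    (hm1 : m1 ≠ i0) (hm2 : m2 ≠ i0) (hm12 : m1 ≠ m2)
    (hq0 : q ∈ A.line i0) (hq2 : q ∈ A.line m2) (hqmult : A.mult q = 2) :
    ∀ n : ℕ, 4 * n + 2 ≤ k → ∃ c : ℕ → Fin k, chInv A i0 m1 m2 c n := by
  intro n
  induction n with
  | zero =>
    intro _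
    exact ⟨fun _ => i0, chBase hm1 hm2 hm12 hq0 hq2 hqmult _⟩
  | succ n ih =>
    intro h
    obtain ⟨c, hc⟩ := ih (by omega)
    obtain ⟨c', _, hc'⟩ := chStep hr hm1 hm2 hm12 hq0 hq2 hqmult hc (by omega)
    exact ⟨c', hc'⟩

end BaseIter

section Assembly

lemma assembly {k : ℕ} {A : LineArrangement k} {i0 m1 m2 : Fin k} {p q : ProjPoint}
    (hr : ∀ r : ℕ, 3 < r → A.t r = 0)
    (hm1 : m1 ≠ i0) (hm2 : m2 ≠ i0) (hm12 : m1 ≠ m2)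
    (hp0 : p ∈ A.line i0) (hp1 : p ∈ A.line m1) (hpmult : A.mult p = 2)
    (hq0 : q ∈ A.line i0) (hq2 : q ∈ A.line m2) (hqmult : A.mult q = 2)
    (n : ℕ) (hk : 4 * n + 2 ≤ k) :
    HasInducedCycle A.levi (2 * (n + 3)) := by
  obtain ⟨c, hd, hb, hdd⟩ := chIter hr hm1 hm2 hm12 hq0 hq2 hqmult n hk
  set L : ℕ → Fin k := fun s => if s = 0 then i0 else if s = n + 2 then m2 else eSeq m1 c (s - 1)
    with hL
  set P : ℕ → ProjPoint := fun s =>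
    if s = 0 then p else if s = n + 2 then q
    else if s = n + 1 then A.meet (eSeq m1 c n) m2 else xSeq A m1 c (s - 1) with hP
  have hL0 : L 0 = i0 := rfl
  have hLend : L (n + 2) = m2 := by simp [hL]
  have hLmid : ∀ s, 1 ≤ s → s ≤ n + 1 → L s = eSeq m1 c (s - 1) := by
    intro s h1 h2
    simp only [hL, if_neg (by omega : ¬ s = 0), if_neg (by omega : ¬ s = n + 2)]
  have hP0 : P 0 = p := rfl
  have hPend : P (n + 2) = q := by simp [hP]
  have hPpen : P (n + 1) = A.meet (eSeq m1 c n) m2 := by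
    simp only [hP]
    rw [if_neg (by omega : ¬ n + 1 = 0), if_neg (by omega : ¬ n + 1 = n + 2)]
    simp
  have hPmid : ∀ s, 1 ≤ s → s ≤ n → P s = xSeq A m1 c (s - 1) := by
    intro s h1 h2
    simp only [hP, if_neg (by omega : ¬ s = 0), if_neg (by omega : ¬ s = n + 2),
      if_neg (by omega : ¬ s = n + 1)]
  -- eSeq distinctness facts
  have hEi0 : ∀ s, s ≤ n → eSeq m1 c s ≠ i0 := fun s hs => eSeq_ne_i0 hd hm1 hs
  have hEm2 : ∀ s, s ≤ n → eSeq m1 c s ≠ m2 := fun s hs => eSeq_ne_m2 hd hm12 hs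
  have hEinj : ∀ s ≤ n, ∀ t ≤ n, eSeq m1 c s = eSeq m1 c t → s = t :=
    fun s hs t ht h => eSeq_inj hd hs ht h
  have hEne : ∀ s, s ≤ n → eSeq m1 c s ≠ eSeq m1 c (s + 1) → True := fun _ _ _ => trivial
  -- L values are in chS
  have hLchS : ∀ m < n + 3, L m ∈ chS i0 m1 m2 c n := by
    intro m hm
    rcases eq_or_ne m 0 with rfl | hm0
    · rw [hL0]; exact mem_chS_i0
    rcases eq_or_ne m (n + 2) with rfl | hm2'
    · rw [hLend]; exact mem_chS_m2
    rw [hLmid m (by omega) (by omega)]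
    exact eSeq_mem_chS (by omega)
  -- injectivity of L
  have hLinj : ∀ s < n + 3, ∀ t < n + 3, L s = L t → s = t := by
    intro s hs t ht h
    rcases eq_or_ne s 0 with rfl | hs0 <;> rcases eq_or_ne t 0 with rfl | ht0
    · rfl
    · rcases eq_or_ne t (n + 2) with rfl | ht2
      · rw [hL0, hLend] at h; exact absurd h.symm hm2
      · rw [hL0, hLmid t (by omega) (by omega)] at h
        exact absurd h.symm (hEi0 _ (by omega))
    · rcases eq_or_ne s (n + 2) with rfl | hs2
      · rw [hL0, hLend] at h; exact absurd h hm2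
      · rw [hL0, hLmid s (by omega) (by omega)] at h
        exact absurd h (hEi0 _ (by omega))
    · rcases eq_or_ne s (n + 2) with rfl | hs2 <;> rcases eq_or_ne t (n + 2) with rfl | ht2
      · rfl
      · rw [hLend, hLmid t (by omega) (by omega)] at h
        exact absurd h.symm (hEm2 _ (by omega))
      · rw [hLend, hLmid s (by omega) (by omega)] at h
        exact absurd h (hEm2 _ (by omega))
      · rw [hLmid s (by omega) (by omega), hLmid t (by omega) (by omega)] at h
        have := hEinj _ (by omega) _ (by omega) h
        omega
  -- key distinctness for meets
  have hEneS : ∀ s, s ≤ n → eSeq m1 c s ≠ eSeq m1 c (s + 1) → True := fun _ _ _ => trivial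
  have hEcons : ∀ s, s + 1 ≤ n → eSeq m1 c s ≠ eSeq m1 c (s + 1) := by
    intro s hs h
    have := hEinj _ (by omega) _ (by omega) h
    omega
  have hEnm2 : eSeq m1 c n ≠ m2 := hEm2 n le_rfl
  -- membership of the x points on their two lines
  have hsing : ∀ s, s < n + 3 → P s ∈ A.sing := by
    intro s hs
    rcases eq_or_ne s 0 with rfl | hs0
    · rw [hP0]; exact LineArrangement.mem_sing A (Ne.symm hm1) hp0 hp1
    rcases eq_or_ne s (n + 2) with rfl | hs2
    · rw [hPend]; exact LineArrangement.mem_sing A (Ne.symm hm2) hq0 hq2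
    rcases eq_or_ne s (n + 1) with rfl | hs1
    · rw [hPpen]
      exact LineArrangement.mem_sing A hEnm2 (LineArrangement.meet_mem_left A hEnm2)
        (LineArrangement.meet_mem_right A hEnm2)
    · rw [hPmid s (by omega) (by omega)]
      have hne := hEcons (s - 1) (by omega)
      rw [show s - 1 + 1 = s from by omega] at hne
      refine LineArrangement.mem_sing A hne ?_ ?_
      · have := LineArrangement.meet_mem_left A (i := eSeq m1 c (s-1)) (j := eSeq m1 c s)
          (by rw [show s = s - 1 + 1 from by omega] at hne ⊢; exact hne)
        rw [xSeq, show s - 1 + 1 = s from by omega]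
        exact this
      · have := LineArrangement.meet_mem_right A (i := eSeq m1 c (s-1)) (j := eSeq m1 c s)
          (by rw [show s = s - 1 + 1 from by omega] at hne ⊢; exact hne)
        rw [xSeq, show s - 1 + 1 = s from by omega]
        exact this
  -- the master incidence property
  have hmaster : ∀ s < n + 3, ∀ m < n + 3,
      (P s ∈ A.line (L m) ↔ m = s ∨ m = (s + 1) % (n + 3)) := by
    intro s hs m hm
    rcases eq_or_ne s 0 with rfl | hs0
    · rw [hP0]
      rw [show (0 + 1) % (n + 3) = 1 from Nat.mod_eq_of_lt (by omega)]
      constructor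
      · intro hmem
        have hth : L m ∈ A.thru p := (LineArrangement.mem_thru A).mpr hmem
        rw [LineArrangement.thru_eq_pair A (Ne.symm hm1) hp0 hp1 hpmult] at hth
        simp only [Finset.mem_insert, Finset.mem_singleton] at hth
        rcases hth with h' | h'
        · left; exact hLinj m hm 0 (by omega) (by rw [hL0]; exact h')
        · right
          exact hLinj m hm 1 (by omega)
            (by rw [hLmid 1 (by omega) (by omega)]; exact h')
      · rintro (rfl | rfl)
        · rw [hL0]; exact hp0
        · rw [hLmid 1 (by omega) (by omega)]; exact hp1
    rcases eq_or_ne s (n + 2) with rfl | hs2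
    · rw [hPend, show (n + 2 + 1) % (n + 3) = 0 from Nat.mod_self _]
      constructor
      · intro hmem
        have hth : L m ∈ A.thru q := (LineArrangement.mem_thru A).mpr hmem
        rw [LineArrangement.thru_eq_pair A (Ne.symm hm2) hq0 hq2 hqmult] at hth
        simp only [Finset.mem_insert, Finset.mem_singleton] at hth
        rcases hth with h' | h'
        · right; exact hLinj m hm 0 (by omega) (by rw [hL0]; exact h')
        · left; exact hLinj m hm (n + 2) (by omega) (by rw [hLend]; exact h')
      · rintro (rfl | rfl)
        · rw [hLend]; exact hq2
        · rw [hL0]; exact hq0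
    rw [show (s + 1) % (n + 3) = s + 1 from Nat.mod_eq_of_lt (by omega)]
    rcases eq_or_ne s (n + 1) with rfl | hs1
    · rw [hPpen]
      constructor
      · intro hmem
        by_contra hcon
        push_neg at hcon
        obtain ⟨hc1, hc2⟩ := hcon
        have hLm_en : L m ≠ eSeq m1 c n := by
          intro h
          refine hc1 (hLinj m hm (n + 1) (by omega) ?_)
          rw [hLmid (n + 1) (by omega) (by omega)]
          simpa using h
        have hLm_m2 : L m ≠ m2 := by
          intro h
          exact hc2 (hLinj m hm (n + 2) (by omega) (by rw [hLend]; exact h))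
        have heq : A.meet (eSeq m1 c n) m2 = A.meet m2 (eSeq m1 c n) :=
          LineArrangement.unique_pt A hEnm2 (LineArrangement.meet_mem_left A hEnm2)
            (LineArrangement.meet_mem_right A hEnm2)
            (LineArrangement.meet_mem_right A (Ne.symm hEnm2))
            (LineArrangement.meet_mem_left A (Ne.symm hEnm2))
        rw [heq] at hmem
        exact hdd (L m) (hLchS m hm) hLm_m2 hLm_en hmem
      · rintro (rfl | rfl)
        · rw [hLmid (n + 1) (by omega) (by omega)]
          simpa using LineArrangement.meet_mem_left A hEnm2
        · rw [hLend]; exact LineArrangement.meet_mem_right A hEnm2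
    · -- 1 ≤ s ≤ n : P s = x (s-1)
      rw [hPmid s (by omega) (by omega)]
      have hne' := hEcons (s - 1) (by omega)
      constructor
      · intro hmem
        by_contra hcon
        push_neg at hcon
        obtain ⟨hc1, hc2⟩ := hcon
        have hLm_e1 : L m ≠ eSeq m1 c (s - 1) := by
          intro h
          exact hc1 (hLinj m hm s (by omega)
            (by rw [hLmid s (by omega) (by omega)]; exact h))
        have hLm_e2 : L m ≠ eSeq m1 c (s - 1 + 1) := by
          intro h
          refine hc2 (hLinj m hm (s + 1) (by omega) ?_)
          rw [hLmid (s + 1) (by omega) (by omega)]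
          rw [show s + 1 - 1 = s - 1 + 1 from by omega]
          exact h
        exact hb (s - 1) (by omega) (L m) (hLchS m hm) hLm_e1 hLm_e2 hmem
      · rintro (h' | h') <;> rw [h']
        · rw [hLmid s (by omega) (by omega), xSeq]
          exact LineArrangement.meet_mem_left A hne'
        · rw [hLmid (s + 1) (by omega) (by omega), xSeq]
          rw [show s + 1 - 1 = s - 1 + 1 from by omega]
          exact LineArrangement.meet_mem_right A hne'
  exact LineArrangement.cycle_builder A (n + 3) (by omega) L P hLinj hsing hmaster

end Assembly

section MainProof

open LineArrangement

lemma exists_other_line {k : ℕ} (A : LineArrangement k) {p : ProjPoint} {i0 : Fin k}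
    (h0 : p ∈ A.line i0) (h2 : A.mult p = 2) :
    ∃ m : Fin k, m ≠ i0 ∧ p ∈ A.line m := by
  have hc : (A.thru p).card = 2 := by rw [A.card_thru]; exact h2
  obtain ⟨a, b, hab, he⟩ := Finset.card_eq_two.mp hc
  have h0' : i0 ∈ A.thru p := A.mem_thru.mpr h0
  rw [he] at h0'
  simp only [Finset.mem_insert, Finset.mem_singleton] at h0'
  rcases h0' with rfl | rfl
  · refine ⟨b, Ne.symm hab, A.mem_thru.mp ?_⟩
    rw [he]; simp
  · refine ⟨a, hab, A.mem_thru.mp ?_⟩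
    rw [he]; simp

/-- `k` even, `k ≥ 4`, `t_3 ≠ 0`, `t_r = 0` for `r > 3`, and some line contains
more than one double point: the Levi graph has an induced cycle of length `2i` for every
`3 ≤ i ≤ ⌊(k+11)/4⌋`. -/
theorem inducedCycles_t3_even_two_double_points (k : ℕ) (hk : 4 ≤ k) (heven : Even k)
    (A : LineArrangement k)
    (ht3 : A.t 3 ≠ 0) (hr : ∀ r : ℕ, 3 < r → A.t r = 0)
    (hdouble : ∃ i : Fin k, ∃ p q : ProjPoint, p ≠ q ∧ p ∈ A.line i ∧ q ∈ A.line i ∧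
      A.mult p = 2 ∧ A.mult q = 2) :
    ∀ i : ℕ, 3 ≤ i → i ≤ (k + 11) / 4 → HasInducedCycle A.levi (2 * i) := by
  intro i hi3 hiub
  obtain ⟨i0, p, q, hpq, hp0, hq0, hp2, hq2⟩ := hdouble
  obtain ⟨m1, hm1, hp1⟩ := exists_other_line A hp0 hp2
  obtain ⟨m2, hm2, hq1⟩ := exists_other_line A hq0 hq2
  have hm12 : m1 ≠ m2 := by
    intro h
    subst h
    exact hpq (A.unique_pt hm1 hp1 hp0 hq1 hq0)
  set n := i - 3 with hn
  have h4i : i * 4 ≤ k + 11 := (Nat.le_div_iff_mul_le (by norm_num)).mp hiub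
  have hkn : 4 * n + 2 ≤ k := by
    obtain ⟨m, hm⟩ := heven
    omega
  have := assembly hr hm1 hm2 hm12 hp0 hp1 hp2 hq0 hq1 hq2 n hkn
  rw [show 2 * i = 2 * (n + 3) from by omega] at *
  exact this

end MainProof
end
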